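/- Let φ : Γ → Γ' be a harmonic morphism of M-metrised graphs and D' ∈ Div(Γ'). Then deg(φ*(D')) = deg(φ) · deg(D'). -/

import Mathlib

noncomputable section
open scoped Classical

/-! ### Groupification of a cancellative additive commutative monoid -/

variable (M : Type) [AddCancelCommMonoid M]

def gpSetoid : Setoid (M × M) where
  r p q := p.1 + q.2 = q.1 + p.2
  iseqv := by
    refine ⟨fun p => rfl, fun h => h.symm, fun {p q r} h1 h2 => ?_⟩
    have key : (p.1 + r.2) + (q.1 + q.2) = (r.1 + p.2) + (q.1 + q.2) := by
      calc (p.1 + r.2) + (q.1 + q.2) = (p.1 + q.2) + (q.1 + r.2) := by abel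
        _ = (q.1 + p.2) + (r.1 + q.2) := by rw [h1, h2]
        _ = (r.1 + p.2) + (q.1 + q.2) := by abel
    exact add_right_cancel key

/-- The groupification `M^gp` of a cancellative commutative monoid `M`:
the quotient of `M × M` by `(a,b) ~ (c,d) ↔ a + d = c + b` (think of `(a,b)` as `a - b`). -/
def Gp : Type := Quotient (gpSetoid M)

namespace Gp

variable {M}

/-- The element `a - b` of `M^gp`. -/
def mk (a b : M) : Gp M := Quotient.mk (gpSetoid M) (a, b)

instance : Zero (Gp M) := ⟨mk 0 0⟩

instance : Add (Gp M) :=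
  ⟨Quotient.map₂ (fun p q => (p.1 + q.1, p.2 + q.2)) (by
    intro p p' hp q q' hq
    show (p.1 + q.1) + (p'.2 + q'.2) = (p'.1 + q'.1) + (p.2 + q.2)
    calc (p.1 + q.1) + (p'.2 + q'.2) = (p.1 + p'.2) + (q.1 + q'.2) := by abel
      _ = (p'.1 + p.2) + (q'.1 + q.2) := by rw [hp, hq]
      _ = (p'.1 + q'.1) + (p.2 + q.2) := by abel)⟩

instance : Neg (Gp M) :=
  ⟨Quotient.map (fun p => (p.2, p.1)) (by
    intro p p' hp
    show p.2 + p'.1 = p'.2 + p.1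
    calc p.2 + p'.1 = p'.1 + p.2 := by abel
      _ = p.1 + p'.2 := hp.symm
      _ = p'.2 + p.1 := by abel)⟩

lemma mk_add_mk (a b c d : M) : mk a b + mk c d = mk (a + c) (b + d) := rfl
lemma neg_mk (a b : M) : -(mk a b) = mk b a := rfl
lemma zero_def : (0 : Gp M) = mk 0 0 := rfl

instance : AddCommGroup (Gp M) where
  add := (· + ·)
  zero := 0
  neg := Neg.neg
  nsmul := nsmulRec
  zsmul := zsmulRec
  add_assoc := by
    intro a b c
    induction a using Quotient.inductionOn with | h a =>
    induction b using Quotient.inductionOn with | h b =>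
    induction c using Quotient.inductionOn with | h c =>
    exact Quotient.sound (by
      show ((a.1 + b.1) + c.1) + (a.2 + (b.2 + c.2)) = (a.1 + (b.1 + c.1)) + ((a.2 + b.2) + c.2)
      abel)
  zero_add := by
    intro a
    induction a using Quotient.inductionOn with | h a =>
    exact Quotient.sound (by
      show (0 + a.1) + a.2 = a.1 + (0 + a.2)
      abel)
  add_zero := by
    intro a
    induction a using Quotient.inductionOn with | h a =>
    exact Quotient.sound (by
      show (a.1 + 0) + a.2 = a.1 + (a.2 + 0)
      abel)
  neg_add_cancel := by
    intro a
    induction a using Quotient.inductionOn with | h a =>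
    exact Quotient.sound (by
      show (a.2 + a.1) + 0 = 0 + (a.1 + a.2)
      abel)
  add_comm := by
    intro a b
    induction a using Quotient.inductionOn with | h a =>
    induction b using Quotient.inductionOn with | h b =>
    exact Quotient.sound (by
      show (a.1 + b.1) + (b.2 + a.2) = (b.1 + a.1) + (a.2 + b.2)
      abel)

/-- The canonical map `M → M^gp`. -/
def of : M →+ Gp M where
  toFun a := mk a 0
  map_zero' := rfl
  map_add' := by
    intro a b
    exact (Quotient.sound (by
      show (a + b) + (0 + 0) = (a + b) + 0
      abel) : mk (a + b) 0 = mk (a + b) (0 + 0))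

/-- Functoriality of groupification: a monoid homomorphism `f : M →+ N` induces
`f^gp : M^gp →+ N^gp`. -/
def map {N : Type} [AddCancelCommMonoid N] (f : M →+ N) : Gp M →+ Gp N where
  toFun := Quotient.map (fun p => (f p.1, f p.2)) (by
    intro p p' hp
    show f p.1 + f p'.2 = f p'.1 + f p.2
    rw [← f.map_add, ← f.map_add, hp])
  map_zero' := by
    show mk (f 0) (f 0) = mk 0 0
    rw [f.map_zero]
  map_add' := by
    intro a b
    induction a using Quotient.inductionOn with | h a =>
    induction b using Quotient.inductionOn with | h b =>
    show mk (f (a.1 + b.1)) (f (a.2 + b.2)) = mk (f a.1 + f b.1) (f a.2 + f b.2)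
    rw [f.map_add, f.map_add]

end Gp

/-- Sharpness: the only invertible element of `M` is `0`. -/
def Sharp : Prop := ∀ a b : M, a + b = 0 → a = 0

/-! ### Monoid-metrised graphs -/

/-- A graph (Definition 2.3 of the paper) together with a metric taking values in the
monoid `M`: `X` is the finite set of vertices and half-edges, `r` sends an element to its
root vertex, `i` is the pairing involution on half-edges, and `l` assigns a length in `M`
to every half-edge (and `0` to every vertex). -/
structure MGraph where
  X : Type
  [finX : Fintype X]
  r : X → X
  i : X → X
  r_idem : ∀ x, r (r x) = r x
  i_invol : ∀ x, i (i x) = x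
  fix_iff : ∀ x, i x = x ↔ r x = x
  l : X → M
  l_i : ∀ x, l (i x) = l x
  l_zero_iff : ∀ x, l x = 0 ↔ i x = x

attribute [instance] MGraph.finX

namespace MGraph

variable {M} (G : MGraph M)

/-- `x` is a vertex iff it is fixed by the involution. -/
def IsVertex (x : G.X) : Prop := G.i x = x

/-- `x` is a half-edge iff it is not fixed by the involution. -/
def IsHalfEdge (x : G.X) : Prop := G.i x ≠ x

/-- The vertex set of `G`. -/
abbrev V : Type := { x : G.X // G.IsVertex x }

/-- The root of any element of `X` is a vertex. -/
def rv (x : G.X) : G.V := ⟨G.r x, (G.fix_iff (G.r x)).mpr (G.r_idem x)⟩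

/-- Two vertices are adjacent if some edge joins them. -/
def Adj (u v : G.V) : Prop := ∃ x, G.IsHalfEdge x ∧ G.rv x = u ∧ G.rv (G.i x) = v

/-- `G` is connected. (All graphs in the paper are assumed connected.) -/
def IsConnected : Prop := Nonempty G.X ∧ ∀ u v : G.V, Relation.ReflTransGen G.Adj u v

/-- The degree of a divisor `D : V → ℤ`. -/
def degD (D : G.V → ℤ) : ℤ := ∑ v, D v

/-- A divisor is effective if all its coefficients are nonnegative. -/
def Effective (D : G.V → ℤ) : Prop := ∀ v, 0 ≤ D v

/-- `g : V → M^gp` is piecewise linear if, along every half-edge, the difference of the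
values of `g` at the two endpoints is an integer multiple of the length of that edge. -/
def IsPL (g : G.V → Gp M) : Prop :=
  ∀ x, G.IsHalfEdge x → ∃ n : ℤ, g (G.rv x) - g (G.rv (G.i x)) = n • Gp.of (G.l x)

/-- The (outgoing) integer slope of `g` along the half-edge `x`. -/
def slope (g : G.V → Gp M) (x : G.X) : ℤ :=
  if h : ∃ n : ℤ, g (G.rv x) - g (G.rv (G.i x)) = n • Gp.of (G.l x) then h.choose else 0

/-- The Laplacian of a piecewise linear function. -/
def lap (g : G.V → Gp M) : G.V → ℤ :=
  fun v => ∑ x : G.X, if G.IsHalfEdge x ∧ G.r x = v.val then G.slope g x else 0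

/-- Principal divisors: those of the form `Δ(g)` for a piecewise linear `g`. -/
def IsPrincipal (D : G.V → ℤ) : Prop := ∃ g, G.IsPL g ∧ G.lap g = D

/-- The rank of a divisor `D`:
`r(D) = max { k : for every effective divisor F of degree k, |D - F| ≠ ∅ }`. -/
def rank (D : G.V → ℤ) : ℤ :=
  sSup {k : ℤ | ∀ F : G.V → ℤ, G.Effective F → G.degD F = k →
    ∃ E : G.V → ℤ, G.Effective E ∧ G.IsPrincipal (D - F - E)}

/-- The divisorial gonality: the minimal degree of a divisor of rank at least 1. -/
def dgon : ℤ := sInf {d : ℤ | ∃ D : G.V → ℤ, 1 ≤ G.rank D ∧ G.degD D = d}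

end MGraph


/-! ### Morphisms of monoid-metrised graphs -/

namespace MGraph

variable {M : Type} [AddCancelCommMonoid M]

/-- A morphism of `M`-metrised graphs (Definition 3.1 of the paper): vertices map to
vertices; a half-edge mapping to a half-edge respects roots and the target length is an
integer multiple of the source length; a half-edge collapsed to a vertex has both of its
endpoints mapped to that vertex. -/
structure Hom (G G' : MGraph M) where
  f : G.X → G'.X
  vtx : ∀ x, G.IsVertex x → G'.IsVertex (f x)
  edge : ∀ x, G.IsHalfEdge x → G'.IsHalfEdge (f x) →
    f (G.r x) = G'.r (f x) ∧ f (G.r (G.i x)) = G'.r (G'.i (f x)) ∧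
      ∃ n : ℕ, G'.l (f x) = n • G.l x
  contr : ∀ x, G.IsHalfEdge x → G'.IsVertex (f x) →
    f (G.r x) = f x ∧ f (G.r (G.i x)) = f x

namespace Hom

variable {G G' : MGraph M} (φ : Hom G G')

/-- The induced map on vertices. -/
def vmap (v : G.V) : G'.V := ⟨φ.f v.val, φ.vtx v.val v.property⟩

/-- The slope `μ_φ(x) = l'(φ(x)) / l(x)` of `φ` along a half-edge `x` (zero if `φ`
collapses `x` to a vertex). -/
def mu (x : G.X) : ℕ :=
  if h : G'.IsHalfEdge (φ.f x) ∧ ∃ n : ℕ, G'.l (φ.f x) = n • G.l x then h.2.choose else 0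

/-- The multiplicity `m_{φ,v}(e') = ∑_{x ∈ H_v, φ(x) = e'} μ_φ(x)` of a half-edge `e'` of
`G'` at a vertex `v` of `G`. -/
def multAt (v : G.V) (e' : G'.X) : ℕ :=
  ∑ x : G.X, if G.IsHalfEdge x ∧ G.r x = v.val ∧ φ.f x = e' then φ.mu x else 0

/-- `φ` is harmonic (= horizontally conformal): for every vertex `v`, all half-edges of
`G'` rooted at `φ(v)` have the same multiplicity at `v`. -/
def Harmonic : Prop :=
  ∀ (v : G.V) (e' f' : G'.X), G'.IsHalfEdge e' → G'.IsHalfEdge f' →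
    G'.r e' = φ.f v.val → G'.r f' = φ.f v.val → φ.multAt v e' = φ.multAt v f'

/-- The horizontal multiplicity `m_φ(v)` of a vertex (the common value of `m_{φ,v}(e')`
over half-edges `e'` rooted at `φ(v)`; zero if there are none). -/
def mV (v : G.V) : ℕ :=
  if h : ∃ e', G'.IsHalfEdge e' ∧ G'.r e' = φ.f v.val then φ.multAt v h.choose else 0

/-- `φ` is non-degenerate if every vertex has positive horizontal multiplicity. -/
def Nondeg : Prop := ∀ v : G.V, 0 < φ.mV v

/-- The multiplicity `m_φ(e') = ∑_{v : φ(v) = r'(e')} m_{φ,v}(e')` of a half-edge of `G'`. -/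
def mE (e' : G'.X) : ℕ :=
  ∑ v : G.V, if φ.f v.val = G'.r e' then φ.multAt v e' else 0

/-- The degree of a harmonic morphism: `deg(φ) = m_φ(e')` for any half-edge `e'` of `G'`. -/
def deg : ℕ := if h : ∃ e', G'.IsHalfEdge e' then φ.mE h.choose else 0

/-- The pullback of divisors: `φ*(D') = ∑_v D'(φ(v)) · m_φ(v) · [v]`. -/
def pullback (D' : G'.V → ℤ) : G.V → ℤ :=
  fun v => D' (φ.vmap v) * (φ.mV v : ℤ)

/-- The pushforward of divisors: `φ_*(D) = ∑_v D(v) · [φ(v)]`. -/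
def pushforward (D : G.V → ℤ) : G'.V → ℤ :=
  fun v' => ∑ v : G.V, if φ.vmap v = v' then D v else 0

end Hom

/-- A cycle in `G`: a cyclic sequence of half-edges `e_0, …, e_k` in which consecutive
half-edges are consecutive (the far endpoint of each is the root of the next) and which
never immediately backtracks. -/
def HasCycle (G : MGraph M) : Prop :=
  ∃ (k : ℕ) (e : ZMod (k + 1) → G.X), (∀ j, G.IsHalfEdge (e j)) ∧
    (∀ j, G.r (G.i (e j)) = G.r (e (j + 1))) ∧ (∀ j, e (j + 1) ≠ G.i (e j))

/-- A tree is a connected graph with no cycles. -/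
def IsTree (G : MGraph M) : Prop := G.IsConnected ∧ ¬ G.HasCycle

/-- The geometric gonality of `G`: the minimal degree of a harmonic, non-degenerate
morphism from `G` onto an `M`-metrised tree, or `∞` if no such morphism exists. -/
def ggon (G : MGraph M) : ℕ∞ :=
  sInf {d : ℕ∞ | ∃ (T : MGraph M) (φ : Hom G T),
    T.IsTree ∧ φ.Harmonic ∧ φ.Nondeg ∧ (φ.deg : ℕ∞) = d}

end MGraph

/-! ### Auxiliary lemmas for the degree formula -/

section DegreeFormula

variable {M}

lemma sharp_nsmul_cancel (hsharp : Sharp M) {z : M} (hz : z ≠ 0) :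
    ∀ {a b : ℕ}, a • z = b • z → a = b := by
  have key : ∀ k : ℕ, k • z = 0 → k = 0 := by
    intro k hk
    cases k with
    | zero => rfl
    | succ n =>
      exfalso
      apply hz
      apply hsharp z (n • z)
      rw [← succ_nsmul']
      exact hk
  have half : ∀ {a b : ℕ}, a ≤ b → a • z = b • z → a = b := by
    intro a b hab h
    have hb : b = a + (b - a) := by omega
    rw [hb, add_nsmul] at h
    have h0 : (b - a) • z = 0 := by
      have h' : a • z + (b - a) • z = a • z + 0 := by rw [add_zero]; exact h.symm
      exact add_left_cancel h'
    have := key _ h0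
    omega
  intro a b h
  rcases le_total a b with hab | hab
  · exact half hab h
  · exact (half hab h.symm).symm

lemma sharp_nsmul_eq_zero (hsharp : Sharp M) {m : M} (hm : m ≠ 0) {k : ℕ}
    (hk : k • m = 0) : k = 0 :=
  sharp_nsmul_cancel hsharp hm (b := 0) (by simpa using hk)

/-- A rational "relative length" `ω_z(m)`: if `a • z = b • m` for positive `a b`, it is
`b / a` (so it behaves like `z / m`), and `0` if `m` is not commensurable with `z`. -/
noncomputable def om (z m : M) : ℚ :=
  if h : ∃ p : ℕ × ℕ, 0 < p.1 ∧ 0 < p.2 ∧ p.1 • z = p.2 • m then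
    (h.choose.2 : ℚ) / (h.choose.1 : ℚ) else 0

lemma om_nonneg (z m : M) : 0 ≤ om z m := by
  rw [om]
  split
  · positivity
  · exact le_rfl

lemma om_self_pos (hsharp : Sharp M) {z : M} (hz : z ≠ 0) : 0 < om z z := by
  have h : ∃ p : ℕ × ℕ, 0 < p.1 ∧ 0 < p.2 ∧ p.1 • z = p.2 • z :=
    ⟨(1, 1), one_pos, one_pos, rfl⟩
  rw [om, dif_pos h]
  obtain ⟨ha, hb, hab⟩ := h.choose_spec
  exact div_pos (by exact_mod_cast hb) (by exact_mod_cast ha)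

lemma om_key (hsharp : Sharp M) {z m₁ m₂ : M} (hz : z ≠ 0) (h₁ : m₁ ≠ 0) (h₂ : m₂ ≠ 0)
    {μ₁ μ₂ : ℕ} (h : μ₁ • m₂ = μ₂ • m₁) :
    (μ₁ : ℚ) * om z m₁ = (μ₂ : ℚ) * om z m₂ := by
  rcases Nat.eq_zero_or_pos μ₁ with hμ₁ | hμ₁
  · subst hμ₁
    have : μ₂ = 0 := sharp_nsmul_eq_zero hsharp h₁ (by simpa using h.symm)
    subst this; simp
  rcases Nat.eq_zero_or_pos μ₂ with hμ₂ | hμ₂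
  · subst hμ₂
    have : μ₁ = 0 := sharp_nsmul_eq_zero hsharp h₂ (by simpa using h)
    omega
  by_cases hc : ∃ p : ℕ × ℕ, 0 < p.1 ∧ 0 < p.2 ∧ p.1 • z = p.2 • m₁
  · obtain ⟨ha₁, hb₁, hab₁⟩ := hc.choose_spec
    set a₁ := hc.choose.1; set b₁ := hc.choose.2
    have hc₂ : ∃ p : ℕ × ℕ, 0 < p.1 ∧ 0 < p.2 ∧ p.1 • z = p.2 • m₂ := by
      refine ⟨(μ₂ * a₁, μ₁ * b₁), Nat.mul_pos hμ₂ ha₁, Nat.mul_pos hμ₁ hb₁, ?_⟩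
      show (μ₂ * a₁) • z = (μ₁ * b₁) • m₂
      rw [mul_smul, hab₁, ← mul_smul, show μ₂ * b₁ = b₁ * μ₂ by ring, mul_smul, ← h,
        ← mul_smul, show b₁ * μ₁ = μ₁ * b₁ by ring]
    obtain ⟨ha₂, hb₂, hab₂⟩ := hc₂.choose_spec
    rw [om, dif_pos hc, om, dif_pos hc₂]
    set a₂ := hc₂.choose.1; set b₂ := hc₂.choose.2
    have e1 : (μ₁ * b₁ * a₂) • z = (b₁ * b₂ * μ₁) • m₂ := by
      rw [mul_smul, hab₂, ← mul_smul, show μ₁ * b₁ * b₂ = b₁ * b₂ * μ₁ by ring]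
    have e2 : (μ₂ * b₂ * a₁) • z = (b₁ * b₂ * μ₂) • m₁ := by
      rw [mul_smul, hab₁, ← mul_smul, show μ₂ * b₂ * b₁ = b₁ * b₂ * μ₂ by ring]
    have e3 : (b₁ * b₂ * μ₁) • m₂ = (b₁ * b₂ * μ₂) • m₁ := by
      simp only [mul_smul, h]
    have hkey : (μ₁ * b₁ * a₂) • z = (μ₂ * b₂ * a₁) • z := e1.trans (e3.trans e2.symm)
    have hnat : μ₁ * b₁ * a₂ = μ₂ * b₂ * a₁ := sharp_nsmul_cancel hsharp hz hkey
    have ha₁' : (a₁ : ℚ) ≠ 0 := by exact_mod_cast ha₁.ne'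
    have ha₂' : (a₂ : ℚ) ≠ 0 := by exact_mod_cast ha₂.ne'
    rw [mul_div_assoc', mul_div_assoc', div_eq_div_iff ha₁' ha₂']
    exact_mod_cast hnat
  · have hc₂ : ¬ ∃ p : ℕ × ℕ, 0 < p.1 ∧ 0 < p.2 ∧ p.1 • z = p.2 • m₂ := by
      rintro ⟨⟨a₂, b₂⟩, ha₂, hb₂, hab₂⟩
      apply hc
      refine ⟨(μ₁ * a₂, μ₂ * b₂), Nat.mul_pos hμ₁ ha₂, Nat.mul_pos hμ₂ hb₂, ?_⟩
      show (μ₁ * a₂) • z = (μ₂ * b₂) • m₁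
      rw [mul_smul, hab₂, ← mul_smul, show μ₁ * b₂ = b₂ * μ₁ by ring, mul_smul, h,
        ← mul_smul, show b₂ * μ₂ = μ₂ * b₂ by ring]
    rw [om, dif_neg hc, om, dif_neg hc₂, mul_zero, mul_zero]

namespace MGraph

variable {G G' : MGraph M}

lemma isHalfEdge_i {x : G.X} (hx : G.IsHalfEdge x) : G.IsHalfEdge (G.i x) := by
  intro h
  rw [G.i_invol] at h
  exact hx h.symm

lemma l_ne_zero {x : G.X} (hx : G.IsHalfEdge x) : G.l x ≠ 0 :=
  fun h => hx ((G.l_zero_iff x).mp h)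

namespace Hom

variable (φ : Hom G G')

lemma mu_spec {x : G.X} (hx : G.IsHalfEdge x) (hfx : G'.IsHalfEdge (φ.f x)) :
    G'.l (φ.f x) = φ.mu x • G.l x := by
  have h : G'.IsHalfEdge (φ.f x) ∧ ∃ n : ℕ, G'.l (φ.f x) = n • G.l x :=
    ⟨hfx, (φ.edge x hx hfx).2.2⟩
  simp only [Hom.mu]
  rw [dif_pos h]
  exact h.2.choose_spec

lemma mu_rel {x : G.X} (hx : G.IsHalfEdge x) (hfx : G'.IsHalfEdge (φ.f x))
    (hfix : G'.IsHalfEdge (φ.f (G.i x))) :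
    φ.mu x • G'.l (φ.f (G.i x)) = φ.mu (G.i x) • G'.l (φ.f x) := by
  rw [φ.mu_spec (isHalfEdge_i hx) hfix, φ.mu_spec hx hfx, G.l_i x]
  exact smul_comm _ _ _

lemma image_halfedge_of_ne {x : G.X} (hx : G.IsHalfEdge x) (hfx : G'.IsHalfEdge (φ.f x))
    (hne : G'.r (φ.f x) ≠ G'.r (G'.i (φ.f x))) : G'.IsHalfEdge (φ.f (G.i x)) := by
  by_contra h
  have hv : G'.IsVertex (φ.f (G.i x)) := not_not.mp h
  obtain ⟨h1, h2⟩ := φ.contr (G.i x) (isHalfEdge_i hx) hv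
  rw [G.i_invol] at h2
  obtain ⟨e1, e2, -⟩ := φ.edge x hx hfx
  exact hne (by rw [← e1, ← e2, h1, h2])

/-- Total preimage weight of a half-edge. -/
def Nw (f' : G'.X) : ℕ := ∑ x : G.X, if G.IsHalfEdge x ∧ φ.f x = f' then φ.mu x else 0

lemma mE_eq_Nw {f' : G'.X} (hf' : G'.IsHalfEdge f') : φ.mE f' = φ.Nw f' := by
  unfold Hom.mE Hom.multAt Nw
  rw [show (∑ v : G.V, if φ.f v.val = G'.r f' then
      (∑ x : G.X, if G.IsHalfEdge x ∧ G.r x = v.val ∧ φ.f x = f' then φ.mu x else 0) else 0)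
      = ∑ v : G.V, ∑ x : G.X, (if φ.f v.val = G'.r f' ∧
        (G.IsHalfEdge x ∧ G.r x = v.val ∧ φ.f x = f') then φ.mu x else 0) from ?_]
  · rw [Finset.sum_comm]
    apply Finset.sum_congr rfl
    intro x _
    by_cases hx : G.IsHalfEdge x ∧ φ.f x = f'
    · rw [if_pos hx]
      have hroot : φ.f (G.r x) = G'.r f' := by
        have := (φ.edge x hx.1 (hx.2 ▸ hf')).1
        rw [hx.2] at this; exact this
      have hs : (∑ v : G.V, if φ.f v.val = G'.r f' ∧
            (G.IsHalfEdge x ∧ G.r x = v.val ∧ φ.f x = f') then φ.mu x else 0)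
          = if φ.f (G.rv x).val = G'.r f' ∧
            (G.IsHalfEdge x ∧ G.r x = (G.rv x).val ∧ φ.f x = f') then φ.mu x else 0 := by
        apply Finset.sum_eq_single_of_mem _ (Finset.mem_univ _)
        intro v _ hv
        rw [if_neg]
        rintro ⟨-, -, hrx, -⟩
        exact hv (Subtype.ext hrx.symm)
      rw [hs, if_pos ⟨hroot, hx.1, rfl, hx.2⟩]
    · rw [if_neg hx]
      apply Finset.sum_eq_zero
      intro v _
      rw [if_neg]
      rintro ⟨-, h1, -, h3⟩
      exact hx ⟨h1, h3⟩
  · apply Finset.sum_congr rfl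
    intro v _
    by_cases hv : φ.f v.val = G'.r f'
    · simp [hv]
    · simp [hv]

lemma mE_eq_of_root (hφ : φ.Harmonic) {e' f' : G'.X} (he' : G'.IsHalfEdge e')
    (hf' : G'.IsHalfEdge f') (h : G'.r e' = G'.r f') : φ.mE e' = φ.mE f' := by
  unfold Hom.mE
  apply Finset.sum_congr rfl
  intro v _
  by_cases hv : φ.f v.val = G'.r e'
  · rw [if_pos hv, if_pos (h ▸ hv), hφ v e' f' he' hf' hv.symm (h ▸ hv).symm]
  · rw [if_neg hv, if_neg (fun hh => hv (h ▸ hh))]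


lemma grouped_sum (φ : Hom G G') (z : M) (v1 w1 : G'.X) :
    (∑ x : G.X, if G.IsHalfEdge x ∧ (G'.IsHalfEdge (φ.f x) ∧ G'.r (φ.f x) = v1 ∧
        G'.r (G'.i (φ.f x)) = w1) then (φ.mu x : ℚ) * om z (G'.l (φ.f x)) else 0)
    = ∑ f' : G'.X, if G'.IsHalfEdge f' ∧ G'.r f' = v1 ∧ G'.r (G'.i f') = w1 then
        (φ.Nw f' : ℚ) * om z (G'.l f') else 0 := by
  have hN : ∀ f' : G'.X, ((φ.Nw f' : ℚ)) =
      ∑ x : G.X, if G.IsHalfEdge x ∧ φ.f x = f' then (φ.mu x : ℚ) else 0 := by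
    intro f'
    rw [Hom.Nw, Nat.cast_sum]
    apply Finset.sum_congr rfl
    intro x _
    split_ifs <;> simp
  symm
  calc (∑ f' : G'.X, if G'.IsHalfEdge f' ∧ G'.r f' = v1 ∧ G'.r (G'.i f') = w1 then
          (φ.Nw f' : ℚ) * om z (G'.l f') else 0)
      = ∑ f' : G'.X, ∑ x : G.X, (if (G'.IsHalfEdge f' ∧ G'.r f' = v1 ∧ G'.r (G'.i f') = w1) ∧
          (G.IsHalfEdge x ∧ φ.f x = f') then (φ.mu x : ℚ) * om z (G'.l f') else 0) := by
        apply Finset.sum_congr rfl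
        intro f' _
        by_cases hP : G'.IsHalfEdge f' ∧ G'.r f' = v1 ∧ G'.r (G'.i f') = w1
        · rw [if_pos hP, hN f', Finset.sum_mul]
          apply Finset.sum_congr rfl
          intro x _
          rw [ite_mul, zero_mul]
          exact if_congr (by tauto) rfl rfl
        · rw [if_neg hP]
          symm
          apply Finset.sum_eq_zero
          intro x _
          rw [if_neg (fun hh => hP hh.1)]
    _ = ∑ x : G.X, ∑ f' : G'.X, (if (G'.IsHalfEdge f' ∧ G'.r f' = v1 ∧ G'.r (G'.i f') = w1) ∧
          (G.IsHalfEdge x ∧ φ.f x = f') then (φ.mu x : ℚ) * om z (G'.l f') else 0) :=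
        Finset.sum_comm
    _ = ∑ x : G.X, (if G.IsHalfEdge x ∧ (G'.IsHalfEdge (φ.f x) ∧ G'.r (φ.f x) = v1 ∧
          G'.r (G'.i (φ.f x)) = w1) then (φ.mu x : ℚ) * om z (G'.l (φ.f x)) else 0) := by
        apply Finset.sum_congr rfl
        intro x _
        have hs : (∑ f' : G'.X, if (G'.IsHalfEdge f' ∧ G'.r f' = v1 ∧ G'.r (G'.i f') = w1) ∧
              (G.IsHalfEdge x ∧ φ.f x = f') then (φ.mu x : ℚ) * om z (G'.l f') else 0)
            = if (G'.IsHalfEdge (φ.f x) ∧ G'.r (φ.f x) = v1 ∧ G'.r (G'.i (φ.f x)) = w1) ∧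
              (G.IsHalfEdge x ∧ φ.f x = φ.f x) then (φ.mu x : ℚ) * om z (G'.l (φ.f x)) else 0 := by
          apply Finset.sum_eq_single_of_mem _ (Finset.mem_univ _)
          intro f' _ hf'
          rw [if_neg]
          rintro ⟨-, -, hfx⟩
          exact hf' hfx.symm
        rw [hs]
        exact if_congr (by tauto) rfl rfl

lemma mE_rev (hsharp : Sharp M) (hφ : φ.Harmonic) {e' : G'.X} (he' : G'.IsHalfEdge e') :
    φ.mE e' = φ.mE (G'.i e') := by
  by_cases hloop : G'.r e' = G'.r (G'.i e')
  · exact φ.mE_eq_of_root hφ he' (isHalfEdge_i he') hloop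
  have hz : G'.l e' ≠ 0 := l_ne_zero he'
  have hflip : ∀ (a b : G'.X), a ≠ b → ∀ x : G.X,
      (G.IsHalfEdge x ∧ (G'.IsHalfEdge (φ.f x) ∧ G'.r (φ.f x) = a ∧ G'.r (G'.i (φ.f x)) = b)) →
      (G.IsHalfEdge (G.i x) ∧ (G'.IsHalfEdge (φ.f (G.i x)) ∧ G'.r (φ.f (G.i x)) = b ∧
        G'.r (G'.i (φ.f (G.i x))) = a)) := by
    rintro a b hab x ⟨hx, hfx, hra, hrb⟩
    have hfix : G'.IsHalfEdge (φ.f (G.i x)) :=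
      φ.image_halfedge_of_ne hx hfx (by rw [hra, hrb]; exact hab)
    obtain ⟨e1, e2, -⟩ := φ.edge x hx hfx
    obtain ⟨c1, c2, -⟩ := φ.edge (G.i x) (isHalfEdge_i hx) hfix
    rw [G.i_invol] at c2
    refine ⟨isHalfEdge_i hx, hfix, ?_, ?_⟩
    · rw [← c1, e2, hrb]
    · rw [← c2, e1, hra]
  have hpoint : ∀ x : G.X,
      (if G.IsHalfEdge x ∧ (G'.IsHalfEdge (φ.f x) ∧ G'.r (φ.f x) = G'.r e' ∧
          G'.r (G'.i (φ.f x)) = G'.r (G'.i e'))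
        then (φ.mu x : ℚ) * om (G'.l e') (G'.l (φ.f x)) else 0)
      = (if G.IsHalfEdge (G.i x) ∧ (G'.IsHalfEdge (φ.f (G.i x)) ∧
          G'.r (φ.f (G.i x)) = G'.r (G'.i e') ∧ G'.r (G'.i (φ.f (G.i x))) = G'.r e')
        then (φ.mu (G.i x) : ℚ) * om (G'.l e') (G'.l (φ.f (G.i x))) else 0) := by
    intro x
    by_cases hL : G.IsHalfEdge x ∧ (G'.IsHalfEdge (φ.f x) ∧ G'.r (φ.f x) = G'.r e' ∧
        G'.r (G'.i (φ.f x)) = G'.r (G'.i e'))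
    · have hR := hflip _ _ hloop x hL
      rw [if_pos hL, if_pos hR]
      exact om_key hsharp hz (l_ne_zero hL.2.1) (l_ne_zero hR.2.1)
        (φ.mu_rel hL.1 hL.2.1 hR.2.1)
    · rw [if_neg hL, if_neg]
      intro hR
      have := hflip _ _ (Ne.symm hloop) (G.i x) hR
      rw [G.i_invol] at this
      exact hL this
  have hsum : (∑ x : G.X, if G.IsHalfEdge x ∧ (G'.IsHalfEdge (φ.f x) ∧
        G'.r (φ.f x) = G'.r e' ∧ G'.r (G'.i (φ.f x)) = G'.r (G'.i e'))
        then (φ.mu x : ℚ) * om (G'.l e') (G'.l (φ.f x)) else 0)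
      = ∑ x : G.X, if G.IsHalfEdge x ∧ (G'.IsHalfEdge (φ.f x) ∧
        G'.r (φ.f x) = G'.r (G'.i e') ∧ G'.r (G'.i (φ.f x)) = G'.r e')
        then (φ.mu x : ℚ) * om (G'.l e') (G'.l (φ.f x)) else 0 :=
    Fintype.sum_bijective G.i (Function.Involutive.bijective G.i_invol) _ _ hpoint
  have hA : (∑ f' : G'.X, if G'.IsHalfEdge f' ∧ G'.r f' = G'.r e' ∧
        G'.r (G'.i f') = G'.r (G'.i e') then (φ.Nw f' : ℚ) * om (G'.l e') (G'.l f') else 0)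
      = (φ.mE e' : ℚ) * ∑ f' : G'.X, (if G'.IsHalfEdge f' ∧ G'.r f' = G'.r e' ∧
        G'.r (G'.i f') = G'.r (G'.i e') then om (G'.l e') (G'.l f') else 0) := by
    rw [Finset.mul_sum]
    apply Finset.sum_congr rfl
    intro f' _
    by_cases hP : G'.IsHalfEdge f' ∧ G'.r f' = G'.r e' ∧ G'.r (G'.i f') = G'.r (G'.i e')
    · rw [if_pos hP, if_pos hP, ← φ.mE_eq_Nw hP.1,
        φ.mE_eq_of_root hφ he' hP.1 hP.2.1.symm]
    · rw [if_neg hP, if_neg hP, mul_zero]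
  have hB : (∑ f' : G'.X, if G'.IsHalfEdge f' ∧ G'.r f' = G'.r (G'.i e') ∧
        G'.r (G'.i f') = G'.r e' then (φ.Nw f' : ℚ) * om (G'.l e') (G'.l f') else 0)
      = (φ.mE (G'.i e') : ℚ) * ∑ f' : G'.X, (if G'.IsHalfEdge f' ∧ G'.r f' = G'.r (G'.i e') ∧
        G'.r (G'.i f') = G'.r e' then om (G'.l e') (G'.l f') else 0) := by
    rw [Finset.mul_sum]
    apply Finset.sum_congr rfl
    intro f' _
    by_cases hP : G'.IsHalfEdge f' ∧ G'.r f' = G'.r (G'.i e') ∧ G'.r (G'.i f') = G'.r e'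
    · rw [if_pos hP, if_pos hP, ← φ.mE_eq_Nw hP.1,
        φ.mE_eq_of_root hφ (isHalfEdge_i he') hP.1 hP.2.1.symm]
    · rw [if_neg hP, if_neg hP, mul_zero]
  have hΩ : (∑ f' : G'.X, if G'.IsHalfEdge f' ∧ G'.r f' = G'.r e' ∧
        G'.r (G'.i f') = G'.r (G'.i e') then om (G'.l e') (G'.l f') else 0)
      = ∑ f' : G'.X, if G'.IsHalfEdge f' ∧ G'.r f' = G'.r (G'.i e') ∧
        G'.r (G'.i f') = G'.r e' then om (G'.l e') (G'.l f') else 0 := by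
    apply Fintype.sum_bijective G'.i (Function.Involutive.bijective G'.i_invol)
    intro f'
    by_cases hP : G'.IsHalfEdge f' ∧ G'.r f' = G'.r e' ∧ G'.r (G'.i f') = G'.r (G'.i e')
    · rw [if_pos hP, if_pos ⟨isHalfEdge_i hP.1,
        hP.2.2, by rw [G'.i_invol]; exact hP.2.1⟩, G'.l_i]
    · rw [if_neg hP, if_neg]
      rintro ⟨h1, h2, h3⟩
      rw [G'.i_invol] at h3
      refine hP ⟨?_, h3, h2⟩
      have := isHalfEdge_i h1
      rwa [G'.i_invol] at this
  have hpos : 0 < ∑ f' : G'.X, (if G'.IsHalfEdge f' ∧ G'.r f' = G'.r e' ∧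
      G'.r (G'.i f') = G'.r (G'.i e') then om (G'.l e') (G'.l f') else 0) := by
    apply Finset.sum_pos'
    · intro f' _
      split_ifs
      · exact om_nonneg _ _
      · exact le_rfl
    · refine ⟨e', Finset.mem_univ _, ?_⟩
      rw [if_pos ⟨he', rfl, rfl⟩]
      exact om_self_pos hsharp hz
  have hmain : (φ.mE e' : ℚ) * (∑ f' : G'.X, (if G'.IsHalfEdge f' ∧ G'.r f' = G'.r e' ∧
        G'.r (G'.i f') = G'.r (G'.i e') then om (G'.l e') (G'.l f') else 0))
      = (φ.mE (G'.i e') : ℚ) * (∑ f' : G'.X, (if G'.IsHalfEdge f' ∧ G'.r f' = G'.r e' ∧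
        G'.r (G'.i f') = G'.r (G'.i e') then om (G'.l e') (G'.l f') else 0)) := by
    rw [← hA, ← grouped_sum, hsum, grouped_sum, hB, ← hΩ]
  have := mul_right_cancel₀ (ne_of_gt hpos) hmain
  exact_mod_cast this


lemma mE_const (hsharp : Sharp M) (hφ : φ.Harmonic) (hG' : G'.IsConnected)
    {e' f' : G'.X} (he' : G'.IsHalfEdge e') (hf' : G'.IsHalfEdge f') :
    φ.mE e' = φ.mE f' := by
  have key : ∀ w' : G'.V, Relation.ReflTransGen G'.Adj (G'.rv e') w' →
      ∀ g', G'.IsHalfEdge g' → G'.r g' = w'.val → φ.mE e' = φ.mE g' := by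
    intro w' h
    induction h with
    | refl =>
      intro g' hg' hr
      exact φ.mE_eq_of_root hφ he' hg' hr.symm
    | tail hab hAdj ih =>
      intro g' hg' hr
      obtain ⟨y, hy, hry, hriy⟩ := hAdj
      have h1 : φ.mE e' = φ.mE y := ih y hy (congrArg Subtype.val hry)
      have h2 : φ.mE y = φ.mE (G'.i y) := φ.mE_rev hsharp hφ hy
      have h3 : φ.mE (G'.i y) = φ.mE g' := by
        apply φ.mE_eq_of_root hφ (isHalfEdge_i hy) hg'
        rw [hr]
        exact congrArg Subtype.val hriy
      exact h1.trans (h2.trans h3)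
  exact key (G'.rv f') (hG'.2 _ _) f' hf' rfl

lemma deg_eq_mE (hsharp : Sharp M) (hφ : φ.Harmonic) (hG' : G'.IsConnected)
    {e' : G'.X} (he' : G'.IsHalfEdge e') : φ.deg = φ.mE e' := by
  have hex : ∃ e', G'.IsHalfEdge e' := ⟨e', he'⟩
  rw [Hom.deg, dif_pos hex]
  exact φ.mE_const hsharp hφ hG' hex.choose_spec he'

lemma mV_eq_multAt (hφ : φ.Harmonic) {e' : G'.X} (he' : G'.IsHalfEdge e') (v : G.V)
    (hr : G'.r e' = φ.f v.val) : φ.mV v = φ.multAt v e' := by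
  have h : ∃ f', G'.IsHalfEdge f' ∧ G'.r f' = φ.f v.val := ⟨e', he', hr⟩
  rw [Hom.mV, dif_pos h]
  exact hφ v h.choose e' h.choose_spec.1 he' h.choose_spec.2 hr

lemma sum_mV (hφ : φ.Harmonic) {e' : G'.X} (he' : G'.IsHalfEdge e') (v' : G'.V)
    (hr : G'.r e' = v'.val) :
    (∑ v : G.V, if φ.vmap v = v' then φ.mV v else 0) = φ.mE e' := by
  unfold Hom.mE
  apply Finset.sum_congr rfl
  intro v _
  by_cases hv : φ.vmap v = v'
  · have hfe : φ.f v.val = G'.r e' := by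
      rw [hr, ← hv]
      rfl
    rw [if_pos hv, if_pos hfe, φ.mV_eq_multAt hφ he' v hfe.symm]
  · rw [if_neg hv, if_neg]
    intro hh
    exact hv (Subtype.ext (hh.trans hr))

lemma exists_rooted (hG' : G'.IsConnected) (hex : ∃ e', G'.IsHalfEdge e') (v' : G'.V) :
    ∃ e', G'.IsHalfEdge e' ∧ G'.r e' = v'.val := by
  obtain ⟨e0, he0⟩ := hex
  rcases Relation.ReflTransGen.cases_head (hG'.2 v' (G'.rv e0)) with heq | ⟨c, hAdj, -⟩
  · exact ⟨e0, he0, by rw [heq]; rfl⟩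
  · obtain ⟨y, hy, hry, -⟩ := hAdj
    exact ⟨y, hy, congrArg Subtype.val hry⟩

end Hom
end MGraph
end DegreeFormula


/-- For a harmonic morphism `φ : Γ → Γ'` of `M`-metrised graphs and a divisor `D'` on
`Γ'`, one has `deg(φ*(D')) = deg(φ) · deg(D')`. -/
theorem MGraph.Hom.degD_pullback (M : Type) [AddCancelCommMonoid M] (hsharp : Sharp M)
    (G G' : MGraph M) (hG : G.IsConnected) (hG' : G'.IsConnected)
    (φ : MGraph.Hom G G') (hφ : φ.Harmonic) (D' : G'.V → ℤ) :
    G.degD (φ.pullback D') = (φ.deg : ℤ) * G'.degD D' := by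
  by_cases hex : ∃ e', G'.IsHalfEdge e'
  · unfold MGraph.degD MGraph.Hom.pullback
    have step1 : ∀ v : G.V, D' (φ.vmap v) * (φ.mV v : ℤ) =
        ∑ v' : G'.V, (if φ.vmap v = v' then D' v' * (φ.mV v : ℤ) else 0) := by
      intro v
      rw [Finset.sum_ite_eq Finset.univ (φ.vmap v) (fun v' => D' v' * (φ.mV v : ℤ)),
        if_pos (Finset.mem_univ _)]
    rw [Finset.sum_congr rfl (fun v _ => step1 v), Finset.sum_comm]
    have step2 : ∀ v' : G'.V, (∑ v : G.V, if φ.vmap v = v' then D' v' * (φ.mV v : ℤ) else 0)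
        = (φ.deg : ℤ) * D' v' := by
      intro v'
      obtain ⟨e', he', hre'⟩ := MGraph.Hom.exists_rooted hG' hex v'
      have hfac : (∑ v : G.V, if φ.vmap v = v' then D' v' * (φ.mV v : ℤ) else 0)
          = D' v' * ∑ v : G.V, (if φ.vmap v = v' then (φ.mV v : ℤ) else 0) := by
        rw [Finset.mul_sum]
        apply Finset.sum_congr rfl
        intro v _
        split_ifs
        · rfl
        · rw [mul_zero]
      have hcast : (∑ v : G.V, if φ.vmap v = v' then (φ.mV v : ℤ) else 0)
          = ((∑ v : G.V, if φ.vmap v = v' then φ.mV v else 0 : ℕ) : ℤ) := by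
        rw [Nat.cast_sum]
        apply Finset.sum_congr rfl
        intro v _
        split_ifs <;> simp
      rw [hfac, hcast, φ.sum_mV hφ he' v' hre', ← φ.deg_eq_mE hsharp hφ hG' he', mul_comm]
    rw [Finset.sum_congr rfl (fun v' _ => step2 v'), ← Finset.mul_sum]
  · have hdeg : φ.deg = 0 := dif_neg hex
    have hmV : ∀ v : G.V, φ.mV v = 0 := by
      intro v
      apply dif_neg
      rintro ⟨e', he', -⟩
      exact hex ⟨e', he'⟩
    simp [MGraph.degD, MGraph.Hom.pullback, hdeg, hmV]

end
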